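/- Let G be a graph whose every connected component is a proper interval graph or a tree, let v be a vertex of G of degree exactly 1, and let G' be obtained from G by attaching a new path u_1, u_2, ..., u_l where u_1 is joined to v by an edge. Then every connected component of G' is a proper interval graph or a tree. -/

import Mathlib

open SimpleGraph

def IsClaw {V : Type*} (G : SimpleGraph V) (v a b c : V) : Prop :=
  a ≠ b ∧ a ≠ c ∧ b ≠ c ∧ G.Adj v a ∧ G.Adj v b ∧ G.Adj v c ∧
    ¬ G.Adj a b ∧ ¬ G.Adj a c ∧ ¬ G.Adj b c

def IsTriangle {V : Type*} (G : SimpleGraph V) (a b c : V) : Prop :=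
  G.Adj a b ∧ G.Adj a c ∧ G.Adj b c

def IsInducedCycle {V : Type*} (G : SimpleGraph V) {n : ℕ} (c : Fin n → V) : Prop :=
  Function.Injective c ∧ ∀ i j : Fin n,
    G.Adj (c i) (c j) ↔ ((i.val + 1) % n = j.val ∨ (j.val + 1) % n = i.val)

def IsInducedPathFun {V : Type*} (G : SimpleGraph V) {m : ℕ} (p : Fin m → V) : Prop :=
  Function.Injective p ∧
    ∀ i j : Fin m, G.Adj (p i) (p j) ↔ (i.val + 1 = j.val ∨ j.val + 1 = i.val)

def IsProperIntervalGraph {W : Type*} (H : SimpleGraph W) : Prop :=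
  ∃ f : W → ℝ, ∀ u v : W, u ≠ v → (H.Adj u v ↔ |f u - f v| ≤ 1)

def ComponentsPIGOrTree {W : Type*} (G : SimpleGraph W) : Prop :=
  ∀ c : G.ConnectedComponent,
    IsProperIntervalGraph (G.induce c.supp) ∨ (G.induce c.supp).IsTree

def IndepSet {V : Type*} (G : SimpleGraph V) (s : Set V) : Prop :=
  ∀ u ∈ s, ∀ v ∈ s, ¬ G.Adj u v

/-- Attach a degree-2-tail of length l at the vertex v. -/
def attachTail {V : Type*} (G : SimpleGraph V) (v : V) (l : ℕ) :
    SimpleGraph (V ⊕ Fin l) :=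
  SimpleGraph.fromRel (fun x y =>
    match x, y with
    | Sum.inl a, Sum.inl b => G.Adj a b
    | Sum.inl a, Sum.inr i => a = v ∧ i.val = 0
    | Sum.inr _, Sum.inl _ => False
    | Sum.inr i, Sum.inr j => j.val = i.val + 1)

section AuxAdj
open Sum
variable {V : Type*} {G : SimpleGraph V} {v : V} {l : ℕ}

lemma adj_ll {a b : V} : (attachTail G v l).Adj (inl a) (inl b) ↔ G.Adj a b := by
  simp only [attachTail, fromRel_adj]
  constructor
  · rintro ⟨hne, h | h⟩
    · exact h
    · exact h.symm
  · intro h; exact ⟨by simp [h.ne], Or.inl h⟩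

lemma adj_lr {a : V} {i : Fin l} :
    (attachTail G v l).Adj (inl a) (inr i) ↔ a = v ∧ i.val = 0 := by
  simp only [attachTail, fromRel_adj]
  constructor
  · rintro ⟨hne, h | h⟩
    · exact h
    · exact h.elim
  · intro h; exact ⟨by simp, Or.inl h⟩

lemma adj_rl {a : V} {i : Fin l} :
    (attachTail G v l).Adj (inr i) (inl a) ↔ a = v ∧ i.val = 0 := by
  rw [adj_comm]; exact adj_lr

lemma adj_rr {i j : Fin l} :
    (attachTail G v l).Adj (inr i) (inr j) ↔ j.val = i.val + 1 ∨ i.val = j.val + 1 := by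
  simp only [attachTail, fromRel_adj]
  constructor
  · rintro ⟨hne, h | h⟩
    · exact Or.inl h
    · exact Or.inr h
  · rintro (h | h)
    · exact ⟨by simp [Fin.ext_iff]; omega, Or.inl h⟩
    · exact ⟨by simp [Fin.ext_iff]; omega, Or.inr h⟩

/-- projection to V -/
def tproj (v : V) : V ⊕ Fin l → V := Sum.elim id (fun _ => v)

lemma step_proj {x y : V ⊕ Fin l} (h : (attachTail G v l).Adj x y) :
    G.Reachable (tproj v x) (tproj v y) := by
  match x, y with
  | inl a, inl b => exact (adj_ll.mp h).reachable
  | inl a, inr i => rw [(adj_lr.mp h).1]; exact Reachable.refl _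
  | inr i, inl b => rw [(adj_rl.mp h).1]; exact Reachable.refl _
  | inr i, inr j => exact Reachable.refl _

lemma reach_proj {x y : V ⊕ Fin l} (h : (attachTail G v l).Reachable x y) :
    G.Reachable (tproj v x) (tproj v y) := by
  obtain ⟨p⟩ := h
  induction p with
  | nil => exact Reachable.refl _
  | cons h p ih => exact (step_proj h).trans ih

lemma reach_lift {a b : V} (h : G.Reachable a b) :
    (attachTail G v l).Reachable (inl a) (inl b) :=
  Reachable.map ⟨inl, fun hab => adj_ll.mpr hab⟩ h

lemma reach_inr_v (i : Fin l) : (attachTail G v l).Reachable (inr i) (inl v) := by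
  obtain ⟨n, hn⟩ := i
  induction n with
  | zero => exact (adj_rl.mpr ⟨rfl, rfl⟩).reachable
  | succ n ih =>
    refine Reachable.trans ?_ (ih (by omega))
    exact (adj_rr.mpr (Or.inr rfl)).reachable

lemma reach_iff {x y : V ⊕ Fin l} :
    (attachTail G v l).Reachable x y ↔ G.Reachable (tproj v x) (tproj v y) := by
  refine ⟨reach_proj, fun h => ?_⟩
  match x, y with
  | inl a, inl b => exact reach_lift h
  | inl a, inr i => exact (reach_lift (l := l) h).trans (reach_inr_v i).symm
  | inr i, inl b => exact (reach_inr_v i).trans (reach_lift h)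
  | inr i, inr j => exact ((reach_inr_v i).trans (reach_lift h)).trans (reach_inr_v j).symm

end AuxAdj

section Generic
variable {W W' : Type*} {H : SimpleGraph W} {H' : SimpleGraph W'}

lemma pig_of_iso (e : H ≃g H') (h : IsProperIntervalGraph H) : IsProperIntervalGraph H' := by
  obtain ⟨f, hf⟩ := h
  refine ⟨fun u => f (e.symm u), fun u w huw => ?_⟩
  rw [← e.symm.map_adj_iff]
  exact hf _ _ (fun hh => huw (e.symm.injective hh))

lemma istree_of_iso (e : H ≃g H') (h : H.IsTree) : H'.IsTree := by
  constructor
  · exact h.isConnected.map e.toHom e.toEquiv.surjective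
  · intro z p hp
    exact h.IsAcyclic _ ((SimpleGraph.Walk.map_isCycle_iff_of_injective
      (p := p) (f := e.symm.toHom) e.symm.injective).mpr hp)

/-- pull back a walk whose support lies in the image of an adjacency-reflecting map -/
lemma walk_pullback (f : W → W') (hinj : Function.Injective f)
    (hadj : ∀ a b : W, H'.Adj (f a) (f b) ↔ H.Adj a b) :
    ∀ {x y : W'} (P : H'.Walk x y), (∀ z ∈ P.support, ∃ c, z = f c) →
      ∀ {a b : W} (hx : x = f a) (hy : y = f b),
      ∃ q : H.Walk a b, P = (q.map ⟨f, fun h => (hadj _ _).mpr h⟩).copy hx.symm hy.symm := by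
  intro x y P
  induction P with
  | nil =>
    intro hs a b hx hy
    subst hx
    obtain rfl : a = b := hinj hy
    exact ⟨SimpleGraph.Walk.nil, by simp⟩
  | cons h P ih =>
    rename_i x z y
    intro hs a b hx hy
    obtain ⟨c, rfl⟩ : ∃ c, z = f c :=
      hs z (by simp [SimpleGraph.Walk.support_cons, P.start_mem_support])
    subst hx
    obtain ⟨q, hq⟩ := ih (fun t ht => hs t (by simp [SimpleGraph.Walk.support_cons, ht])) rfl hy
    refine ⟨SimpleGraph.Walk.cons ((hadj _ _).mp h) q, ?_⟩
    subst hy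
    simp only [SimpleGraph.Walk.copy_rfl_rfl] at hq ⊢
    rw [SimpleGraph.Walk.map_cons, hq]

lemma acyclic_pullback (f : W → W') (hinj : Function.Injective f)
    (hadj : ∀ a b : W, H'.Adj (f a) (f b) ↔ H.Adj a b) (hH : H.IsAcyclic)
    {x : W'} (P : H'.Walk x x) (hs : ∀ z ∈ P.support, ∃ c, z = f c) : ¬ P.IsCycle := by
  intro hP
  obtain ⟨a, rfl⟩ := hs x P.start_mem_support
  obtain ⟨q, rfl⟩ := walk_pullback f hinj hadj P hs rfl rfl
  rw [SimpleGraph.Walk.copy_rfl_rfl] at hP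
  exact hH _ ((SimpleGraph.Walk.map_isCycle_iff_of_injective hinj).mp hP)

lemma cycle_two_neighbors {z : W} (P : H.Walk z z) (hP : P.IsCycle) {y : W}
    (hy : y ∈ P.support) :
    ∃ b₁ b₂, b₁ ≠ b₂ ∧ H.Adj y b₁ ∧ H.Adj y b₂ ∧ b₁ ∈ P.support ∧ b₂ ∈ P.support := by
  classical
  have hQ : (P.rotate y hy).IsCycle := hP.rotate hy
  have hmem : ∀ t, t ∈ (P.rotate y hy).support → t ∈ P.support := by
    intro t ht
    rw [SimpleGraph.Walk.support_eq_cons] at ht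
    rcases List.mem_cons.mp ht with rfl | ht
    · exact hy
    · have := (SimpleGraph.Walk.support_rotate P y hy).mem_iff.mp ht
      exact List.mem_of_mem_tail this
  set Q := P.rotate y hy with hQdef
  clear_value Q
  cases Q with
  | nil => exact absurd rfl hQ.ne_nil
  | cons h1 q =>
    rename_i c
    rw [SimpleGraph.Walk.cons_isCycle_iff] at hQ
    have hqlen : 1 ≤ q.length := by
      have := (hP.rotate hy).three_le_length
      rw [← hQdef] at this
      simp only [SimpleGraph.Walk.length_cons] at this
      omega
    rcases hrev : q.reverse with _ | ⟨h2, q2⟩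
    · exfalso
      have : q.length = 0 := by
        have := congrArg SimpleGraph.Walk.length hrev
        simpa using this
      omega
    · rename_i c₂
      have hc2edge : s(y, c₂) ∈ q.edges := by
        have : s(y, c₂) ∈ q.reverse.edges := by
          rw [hrev]; simp
        rwa [SimpleGraph.Walk.edges_reverse, List.mem_reverse] at this
      refine ⟨c, c₂, ?_, h1, h2, ?_, ?_⟩
      · rintro rfl
        exact hQ.2 hc2edge
      · exact hmem c (by simp [SimpleGraph.Walk.support_cons, q.start_mem_support])
      · refine hmem c₂ ?_
        have : c₂ ∈ q.reverse.support := by rw [hrev]; simp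
        rw [SimpleGraph.Walk.support_reverse, List.mem_reverse] at this
        simp [SimpleGraph.Walk.support_cons, this]

end Generic

section InlIso
variable {V : Type*} (G : SimpleGraph V) (v : V) (l : ℕ)

/-- the induced subgraph on an `inl` image is isomorphic to the original induced subgraph -/
noncomputable def inducedInlIso (s : Set V) :
    G.induce s ≃g (attachTail G v l).induce (Sum.inl '' s) where
  toEquiv := Equiv.Set.image Sum.inl s Sum.inl_injective
  map_rel_iff' := by
    intro a b
    simp only [Equiv.Set.image_apply, comap_adj, Function.Embedding.coe_subtype]
    exact adj_ll

end InlIso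

/-- Attaching a degree-2-tail at a pendant vertex preserves the property that
every connected component is a proper interval graph or a tree. -/
theorem stmt6 {V : Type*} (G : SimpleGraph V) (v : V) (l : ℕ) (hl : 1 ≤ l)
    (hdeg : (G.neighborSet v).ncard = 1)
    (hG : ComponentsPIGOrTree G) :
    ComponentsPIGOrTree (attachTail G v l) := by
  classical
  intro c
  induction c using SimpleGraph.ConnectedComponent.ind with | _ x => ?_
  obtain ⟨w, hw⟩ := Set.ncard_eq_one.mp hdeg
  have hadjvw : G.Adj v w := by
    have : w ∈ G.neighborSet v := by rw [hw]; exact rfl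
    exact this
  have huniq : ∀ y, G.Adj v y → y = w := by
    intro y hy
    have : y ∈ G.neighborSet v := hy
    rwa [hw, Set.mem_singleton_iff] at this
  by_cases hvx : G.Reachable (tproj v x) v
  · -- component of v : gets the tail
    have hcx : (attachTail G v l).connectedComponentMk x
        = (attachTail G v l).connectedComponentMk (Sum.inl v) := by
      refine ConnectedComponent.sound (reach_iff.mpr ?_)
      simpa [tproj] using hvx
    rw [hcx]
    set dv := G.connectedComponentMk v with hdv
    set cs := ((attachTail G v l).connectedComponentMk (Sum.inl v)).supp with hcs
    have hmem_inl : ∀ b : V, Sum.inl b ∈ cs ↔ b ∈ dv.supp := by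
      intro b
      rw [hcs, hdv, ConnectedComponent.mem_supp_iff, ConnectedComponent.mem_supp_iff,
        ConnectedComponent.eq, ConnectedComponent.eq]
      exact reach_iff (x := Sum.inl b) (y := Sum.inl v)
    have hmem_inr : ∀ i : Fin l, Sum.inr i ∈ cs := by
      intro i
      rw [hcs, ConnectedComponent.mem_supp_iff, ConnectedComponent.eq]
      exact reach_inr_v i
    have hvd : v ∈ dv.supp := by rw [hdv, ConnectedComponent.mem_supp_iff]
    have hwd : w ∈ dv.supp := by
      rw [hdv, ConnectedComponent.mem_supp_iff, ConnectedComponent.eq]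
      exact hadjvw.symm.reachable
    have hinlv : Sum.inl v ∈ cs := (hmem_inl v).mpr hvd
    rcases hG dv with hpig | htree
    · -- proper interval case
      left
      obtain ⟨f₀, hf₀⟩ := hpig
      have hvw_ne : (⟨v, hvd⟩ : ↥dv.supp) ≠ ⟨w, hwd⟩ :=
        fun h => hadjvw.ne (congrArg Subtype.val h)
      obtain ⟨f, hf, hwle⟩ : ∃ f : ↥dv.supp → ℝ,
          (∀ u u' : ↥dv.supp, u ≠ u' →
            ((G.induce dv.supp).Adj u u' ↔ |f u - f u'| ≤ 1)) ∧
          f ⟨w, hwd⟩ ≤ f ⟨v, hvd⟩ := by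
        by_cases hle : f₀ ⟨w, hwd⟩ ≤ f₀ ⟨v, hvd⟩
        · exact ⟨f₀, hf₀, hle⟩
        · refine ⟨fun z => -(f₀ z), fun u u' huu => ?_, ?_⟩
          · rw [hf₀ u u' huu]
            have heq : -f₀ u - -f₀ u' = -(f₀ u - f₀ u') := by ring
            rw [heq, abs_neg]
          · show -f₀ ⟨w, hwd⟩ ≤ -f₀ ⟨v, hvd⟩
            linarith [le_of_not_ge hle]
      set fv := f ⟨v, hvd⟩ with hfv
      set fw := f ⟨w, hwd⟩ with hfw
      have hadj_ind : (G.induce dv.supp).Adj ⟨v, hvd⟩ ⟨w, hwd⟩ := hadjvw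
      have hdist_vw : |fv - fw| ≤ 1 := (hf _ _ hvw_ne).mp hadj_ind
      have hfvfw : fv ≤ fw + 1 := by
        have := abs_le.mp hdist_vw
        linarith [this.2]
      -- every vertex of the component lies at position ≤ fv
      have claim1 : ∀ (b : V) (hb : b ∈ dv.supp), f ⟨b, hb⟩ ≤ fv := by
        have key : ∀ (a b : V) (p : G.Walk a b) (ha : a ∈ dv.supp) (hb : b ∈ dv.supp),
            f ⟨a, ha⟩ ≤ fv → f ⟨b, hb⟩ ≤ fv := by
          intro a b p
          induction p with
          | nil => intro ha hb h; exact h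
          | cons hadj p ih =>
            rename_i a c b
            intro ha hb hfa
            have hc : c ∈ dv.supp := by
              rw [ConnectedComponent.mem_supp_iff] at ha ⊢
              rw [← ha, ConnectedComponent.eq]
              exact hadj.symm.reachable
            refine ih hc hb ?_
            by_cases hcv : c = v
            · subst hcv; exact le_of_eq rfl
            · by_cases hcw : c = w
              · subst hcw
                exact le_trans hwle (le_refl _)
              · have hnadj : ¬ G.Adj v c := fun hh => hcw (huniq c hh)
                have hne1 : (⟨a, ha⟩ : ↥dv.supp) ≠ ⟨c, hc⟩ :=
                  fun h => hadj.ne (congrArg Subtype.val h)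
                have h1 : |f ⟨a, ha⟩ - f ⟨c, hc⟩| ≤ 1 := (hf _ _ hne1).mp hadj
                have hne2 : (⟨v, hvd⟩ : ↥dv.supp) ≠ ⟨c, hc⟩ :=
                  fun h => hcv (congrArg Subtype.val h).symm
                have h2 : ¬ |fv - f ⟨c, hc⟩| ≤ 1 := by
                  intro hh
                  exact hnadj ((hf _ _ hne2).mpr hh)
                have h1' := abs_le.mp h1
                rcases lt_or_ge (f ⟨c, hc⟩) fv with hlt | hge
                · linarith
                · exfalso
                  apply h2
                  rw [abs_le]
                  constructor <;> linarith [h1'.1, h1'.2]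
        intro b hb
        obtain ⟨p⟩ : G.Reachable v b := by
          rw [ConnectedComponent.mem_supp_iff, ConnectedComponent.eq] at hb
          exact hb.symm
        exact key v b p hvd hb (le_of_eq rfl)
      have claim2 : ∀ (b : V) (hb : b ∈ dv.supp), b ≠ v → b ≠ w → f ⟨b, hb⟩ < fv - 1 := by
        intro b hb hbv hbw
        have hnadj : ¬ G.Adj v b := fun hh => hbw (huniq b hh)
        have hne2 : (⟨v, hvd⟩ : ↥dv.supp) ≠ ⟨b, hb⟩ :=
          fun h => hbv (congrArg Subtype.val h).symm
        have h2 : ¬ |fv - f ⟨b, hb⟩| ≤ 1 := fun hh => hnadj ((hf _ _ hne2).mpr hh)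
        have h3 := claim1 b hb
        rcases lt_or_ge (f ⟨b, hb⟩) (fv - 1) with h | h
        · exact h
        · exfalso; apply h2; rw [abs_le]; constructor <;> linarith
      have hble : ∀ (b : V) (hb : b ∈ dv.supp), b ≠ v → f ⟨b, hb⟩ ≤ fw := by
        intro b hb hbv
        by_cases hbw : b = w
        · subst hbw; exact le_of_eq rfl
        · linarith [claim2 b hb hbv hbw]
      -- the new interval representation
      refine ⟨fun z => Sum.elim
        (fun b => if b = v then fw + 1 else if hb : b ∈ dv.supp then f ⟨b, hb⟩ else 0)
        (fun i : Fin l => fw + 2 + i.val) z.val, ?_⟩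
      rintro ⟨y₁, h₁⟩ ⟨y₂, h₂⟩ hne
      have hne' : y₁ ≠ y₂ := fun h => hne (Subtype.ext h)
      have hadj_iff : ((attachTail G v l).induce cs).Adj ⟨y₁, h₁⟩ ⟨y₂, h₂⟩
          ↔ (attachTail G v l).Adj y₁ y₂ := Iff.rfl
      rw [hadj_iff]
      -- helper for the (inl v) vs (inl b) case
      have main_lv : ∀ (b : V) (hb : b ∈ dv.supp), b ≠ v →
          (G.Adj v b ↔ |(fw + 1) - f ⟨b, hb⟩| ≤ 1) := by
        intro b hb hbv
        constructor
        · intro h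
          have hbw := huniq b h
          subst hbw
          simp [hfw]
        · intro h
          by_cases hbw : b = w
          · subst hbw; exact hadjvw
          · exfalso
            have := claim2 b hb hbv hbw
            have habs := abs_le.mp h
            have : fv - 1 ≤ fw := by linarith
            have hblt : f ⟨b, hb⟩ < fw := by linarith [claim2 b hb hbv hbw]
            linarith [habs.1, habs.2]
      -- helper for the (inl b) vs (inr i) case
      have main_li : ∀ (b : V) (hb : Sum.inl b ∈ cs) (i : Fin l),
          ((b = v ∧ i.val = 0) ↔
            |(if b = v then fw + 1 else if hb' : b ∈ dv.supp then f ⟨b, hb'⟩ else 0)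
              - (fw + 2 + i.val)| ≤ 1) := by
        intro b hb i
        by_cases hbv : b = v
        · subst hbv
          rw [if_pos rfl]
          have h0 : (0:ℝ) ≤ (i.val : ℝ) := by positivity
          constructor
          · rintro ⟨-, hi⟩
            rw [hi]
            norm_num
          · intro h
            refine ⟨rfl, ?_⟩
            have habs := abs_le.mp h
            have : (i.val : ℝ) ≤ 0 := by linarith [habs.1]
            exact_mod_cast le_antisymm this h0
        · rw [if_neg hbv]
          have hbd : b ∈ dv.supp := (hmem_inl b).mp hb
          rw [dif_pos hbd]
          have hble' : f ⟨b, hbd⟩ ≤ fw := hble b hbd hbv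
          have h0 : (0:ℝ) ≤ (i.val : ℝ) := by positivity
          constructor
          · rintro ⟨h, -⟩; exact absurd h hbv
          · intro h
            exfalso
            have habs := abs_le.mp h
            linarith [habs.1]
      rcases y₁ with b₁ | i₁ <;> rcases y₂ with b₂ | i₂
      · -- inl / inl
        have hb₁ : b₁ ∈ dv.supp := (hmem_inl b₁).mp h₁
        have hb₂ : b₂ ∈ dv.supp := (hmem_inl b₂).mp h₂
        have hbne : b₁ ≠ b₂ := fun h => hne' (congrArg Sum.inl h)
        rw [adj_ll]
        simp only [Sum.elim_inl]
        by_cases h1v : b₁ = v <;> by_cases h2v : b₂ = v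
        · exact absurd (h1v.trans h2v.symm) hbne
        · subst h1v
          rw [if_pos rfl, if_neg h2v, dif_pos hb₂]
          exact main_lv b₂ hb₂ h2v
        · subst h2v
          rw [if_pos rfl, if_neg h1v, dif_pos hb₁, adj_comm, abs_sub_comm]
          exact main_lv b₁ hb₁ h1v
        · rw [if_neg h1v, if_neg h2v, dif_pos hb₁, dif_pos hb₂]
          have hne2 : (⟨b₁, hb₁⟩ : ↥dv.supp) ≠ ⟨b₂, hb₂⟩ :=
            fun h => hbne (congrArg Subtype.val h)
          exact hf _ _ hne2
      · -- inl / inr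
        rw [adj_lr]
        simp only [Sum.elim_inl, Sum.elim_inr]
        exact main_li b₁ h₁ i₂
      · -- inr / inl
        rw [adj_rl]
        simp only [Sum.elim_inl, Sum.elim_inr]
        rw [abs_sub_comm]
        exact main_li b₂ h₂ i₁
      · -- inr / inr
        rw [adj_rr]
        simp only [Sum.elim_inr]
        have hine : i₁.val ≠ i₂.val := fun h => hne' (congrArg Sum.inr (Fin.ext h))
        have harith : (fw + 2 + i₁.val) - (fw + 2 + i₂.val)
            = (i₁.val : ℝ) - (i₂.val : ℝ) := by ring
        rw [harith]
        constructor
        · rintro (h | h)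
          · rw [h]; push_cast; rw [abs_le]; constructor <;> linarith
          · rw [h]; push_cast; rw [abs_le]; constructor <;> linarith
        · intro h
          have habs := abs_le.mp h
          have h1 : (i₁.val : ℝ) ≤ (i₂.val : ℝ) + 1 := by linarith [habs.2]
          have h2 : (i₂.val : ℝ) ≤ (i₁.val : ℝ) + 1 := by linarith [habs.1]
          have h1' : i₁.val ≤ i₂.val + 1 := by exact_mod_cast h1
          have h2' : i₂.val ≤ i₁.val + 1 := by exact_mod_cast h2
          omega
    · -- tree case: the new component is a tree
      right
      constructor
      · -- connected
        refine induce_connected_of_patches (Sum.inl v) hinlv ?_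
        intro y hy
        have hry : (attachTail G v l).Reachable (Sum.inl v) y := by
          rw [ConnectedComponent.mem_supp_iff, ConnectedComponent.eq] at hy
          exact hy.symm
        obtain ⟨p⟩ := hry
        refine ⟨{z | z ∈ p.support}, ?_, p.start_mem_support, p.end_mem_support, ?_⟩
        · intro z hz
          rw [ConnectedComponent.mem_supp_iff, ConnectedComponent.eq]
          exact ⟨(p.takeUntil z hz).reverse⟩
        · exact (p.connected_induce_support) _ _
      · -- acyclic
        intro z p hcyc
        -- show no tail vertex occurs in the cycle
        have hallinl : ∀ t ∈ p.support, ∃ (b : V) (hb : b ∈ dv.supp),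
            (t : ↥cs).val = Sum.inl b := by
          by_contra hcon
          push_neg at hcon
          obtain ⟨t₀, ht₀, ht₀'⟩ := hcon
          obtain ⟨i₀, hi₀⟩ : ∃ i : Fin l, (t₀ : ↥cs).val = Sum.inr i := by
            rcases htv : (t₀ : ↥cs).val with b | i
            · exfalso
              have hb : b ∈ dv.supp := by
                have := t₀.prop
                rw [htv] at this
                exact (hmem_inl b).mp this
              exact ht₀' b hb htv
            · exact ⟨i, rfl⟩
          set S : Set ℕ := {n | ∃ t ∈ p.support, ∃ (hn : n < l),
            (t : ↥cs).val = Sum.inr ⟨n, hn⟩} with hS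
          have hS₀ : i₀.val ∈ S := ⟨t₀, ht₀, i₀.isLt, by rw [hi₀]⟩
          have hdec : DecidablePred (· ∈ S) := Classical.decPred _
          set n := Nat.findGreatest (· ∈ S) l with hn
          have hnS : n ∈ S := Nat.findGreatest_spec (le_of_lt i₀.isLt) hS₀
          have hmax : ∀ m ∈ S, m ≤ n := by
            intro m hm
            obtain ⟨t', ht', hml, h'⟩ := hm
            exact Nat.le_findGreatest (le_of_lt hml) ⟨t', ht', hml, h'⟩
          obtain ⟨t, ht, hnl, htval⟩ := hnS
          obtain ⟨b₁, b₂, hbne, ha₁, ha₂, hm₁, hm₂⟩ := cycle_two_neighbors p hcyc ht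
          have form : ∀ b' : ↥cs, ((attachTail G v l).induce cs).Adj t b' → b' ∈ p.support →
              (b'.val = Sum.inl v ∧ n = 0) ∨ (∃ j : Fin l, b'.val = Sum.inr j ∧ n = j.val + 1) := by
            intro b' hadj' hmem'
            have hadjG : (attachTail G v l).Adj (Sum.inr ⟨n, hnl⟩) b'.val := by
              rw [← htval]
              exact hadj'
            rcases hbv : b'.val with b | j
            · rw [hbv] at hadjG
              obtain ⟨rfl, h0⟩ := adj_rl.mp hadjG
              exact Or.inl ⟨rfl, h0⟩
            · rw [hbv] at hadjG
              rcases adj_rr.mp hadjG with h | h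
              · exfalso
                have h' : j.val = n + 1 := h
                have hjmem : j.val ∈ S := ⟨b', hmem', j.isLt, by rw [hbv]⟩
                have := hmax j.val hjmem
                omega
              · have h' : n = j.val + 1 := h
                exact Or.inr ⟨j, rfl, h'⟩
          rcases form b₁ ha₁ hm₁ with ⟨hval₁, hn₁⟩ | ⟨j₁, hval₁, hn₁⟩ <;>
            rcases form b₂ ha₂ hm₂ with ⟨hval₂, hn₂⟩ | ⟨j₂, hval₂, hn₂⟩
          · exact hbne (Subtype.ext (hval₁.trans hval₂.symm))
          · omega
          · omega
          · have : j₁ = j₂ := Fin.ext (by omega)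
            exact hbne (Subtype.ext (by rw [hval₁, hval₂, this]))
        -- pull the cycle back to the tree
        refine acyclic_pullback
          (f := fun t : ↥dv.supp => (⟨Sum.inl t.val, (hmem_inl t.val).mpr t.prop⟩ : ↥cs))
          ?_ ?_ htree.IsAcyclic p ?_ hcyc
        · intro s t h
          have : Sum.inl s.val = Sum.inl t.val := congrArg Subtype.val h
          exact Subtype.ext (Sum.inl_injective this)
        · intro a b
          simp only [comap_adj, Function.Embedding.coe_subtype]
          exact adj_ll
        · intro t ht
          obtain ⟨b, hb, hval⟩ := hallinl t ht
          exact ⟨⟨b, hb⟩, Subtype.ext hval⟩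
  · -- a component not containing v : unchanged
    obtain ⟨a, rfl⟩ : ∃ a, x = Sum.inl a := by
      cases x with
      | inl a => exact ⟨a, rfl⟩
      | inr i => exact absurd (Reachable.refl v) hvx
    have hnra : ¬ G.Reachable a v := hvx
    set d := G.connectedComponentMk a with hd
    have hsupp : ((attachTail G v l).connectedComponentMk (Sum.inl a)).supp
        = Sum.inl '' d.supp := by
      ext y
      rw [ConnectedComponent.mem_supp_iff, ConnectedComponent.eq]
      constructor
      · intro hr
        have hr' := reach_proj hr
        cases y with
        | inl b =>
          refine ⟨b, ?_, rfl⟩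
          rw [hd, ConnectedComponent.mem_supp_iff, ConnectedComponent.eq]
          exact hr'
        | inr i =>
          exfalso
          exact hnra (Reachable.symm hr')
      · rintro ⟨b, hb, rfl⟩
        refine reach_lift ?_
        rw [hd, ConnectedComponent.mem_supp_iff, ConnectedComponent.eq] at hb
        exact hb
    rw [hsupp]
    rcases hG d with hpig | htree
    · exact Or.inl (pig_of_iso (inducedInlIso G v l d.supp) hpig)
    · exact Or.inr (istree_of_iso (inducedInlIso G v l d.supp) htree)
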